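/- arXiv:1903.05058 — 2 statements merged into one kernel-verified Lean document; each statement's English description precedes it below -/
import Mathlib

section
/- Let ω be a random variable with ω ≥ −1 a.s., E[ω] = 0, and tail bounds C' x^{−γ} ≤ P[ω > x] ≤ C'' x^{−γ} for all large x, with γ ∈ (1,2). For β ∈ (0,1) define the tilted law P̃(A) = E[(1+βω) 1_{ω ∈ A}]. Then there exists a constant C > 0 such that for all x ≥ β^{−1}, (1/C) β x^{−γ+1} ≤ P̃[ω ≥ x] ≤ C β x^{−γ+1}. -/
open MeasureTheory Set

/-- Auxiliary: upper bound for the truncated first moment `∫_{W ≥ x} W dμ`. -/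
lemma tail_integral_upper
    {Ω : Type*} [MeasurableSpace Ω] (μ : Measure Ω) [IsProbabilityMeasure μ]
    (W : Ω → ℝ) (hWmeas : Measurable W) (hWint : Integrable W μ)
    (γ C'' x₀ : ℝ) (hγ1 : 1 < γ) (hC'' : 0 < C'') (hx₀ : 0 < x₀)
    (htail : ∀ x : ℝ, x₀ ≤ x → (μ {a | x < W a}).toReal ≤ C'' * x ^ (-γ)) :
    ∃ D : ℝ, 0 < D ∧ ∀ x : ℝ, 1 ≤ x →
      ∫ a in {a | x ≤ W a}, W a ∂μ ≤ D * x ^ (-γ + 1) := by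
  set x₂ : ℝ := max 1 (2 * x₀) with hx₂def
  have hx₂1 : 1 ≤ x₂ := le_max_left _ _
  have hx₂0 : 0 < x₂ := lt_of_lt_of_le one_pos hx₂1
  set K : ℝ := 2 ^ γ * C'' + C'' / (γ - 1) with hKdef
  have hKpos : 0 < K := by
    have h2γ : (0:ℝ) < 2 ^ γ := Real.rpow_pos_of_pos (by norm_num) _
    have : 0 < C'' / (γ - 1) := div_pos hC'' (by linarith)
    positivity
  set M : ℝ := ∫ a, |W a| ∂μ with hMdef
  have hM0 : 0 ≤ M := integral_nonneg fun a => abs_nonneg _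
  refine ⟨max K ((M + 1) * x₂ ^ (γ - 1)), lt_max_of_lt_left hKpos, ?_⟩
  intro x hx1
  have hx0 : 0 < x := lt_of_lt_of_le one_pos hx1
  have hxp : 0 < x ^ (-γ + 1) := Real.rpow_pos_of_pos hx0 _
  set S : Set Ω := {a | x ≤ W a} with hSdef
  have hSm : MeasurableSet S := measurableSet_le measurable_const hWmeas
  by_cases hcase : x₂ ≤ x
  · -- main case: layer cake
    have hx₀x : x₀ ≤ x / 2 := by
      have : 2 * x₀ ≤ x := le_trans (le_max_right _ _) hcase
      linarith
    have hnn : 0 ≤ᵐ[μ.restrict S] W := by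
      refine (ae_restrict_iff' hSm).2 (Filter.Eventually.of_forall fun a ha => ?_)
      have ha' : x ≤ W a := ha
      simp only [Pi.zero_apply]
      linarith
    have h1 : ∫ a in S, W a ∂μ = (∫⁻ a in S, ENNReal.ofReal (W a) ∂μ).toReal :=
      integral_eq_lintegral_of_nonneg_ae hnn hWmeas.aestronglyMeasurable
    have h2 : ∫⁻ a in S, ENNReal.ofReal (W a) ∂μ
        = ∫⁻ t in Ioi (0:ℝ), (μ.restrict S) {a | t < W a} :=
      lintegral_eq_lintegral_meas_lt _ hnn hWmeas.aemeasurable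
    -- split the t-integral
    have hsplit : ∫⁻ t in Ioi (0:ℝ), (μ.restrict S) {a | t < W a}
        = (∫⁻ t in Ioc (0:ℝ) x, (μ.restrict S) {a | t < W a})
          + ∫⁻ t in Ioi x, (μ.restrict S) {a | t < W a} := by
      rw [← lintegral_union measurableSet_Ioi Ioc_disjoint_Ioi_same,
        Ioc_union_Ioi_eq_Ioi hx0.le]
    -- bound on the measure of S
    have hSbound : μ S ≤ ENNReal.ofReal (C'' * (x / 2) ^ (-γ)) := by
      have hsub : S ⊆ {a | x / 2 < W a} := by
        intro a ha
        have ha' : x ≤ W a := ha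
        show x / 2 < W a
        linarith
      have h3 : (μ {a | x / 2 < W a}).toReal ≤ C'' * (x / 2) ^ (-γ) := htail _ hx₀x
      calc μ S ≤ μ {a | x / 2 < W a} := measure_mono hsub
        _ = ENNReal.ofReal ((μ {a | x / 2 < W a}).toReal) :=
            (ENNReal.ofReal_toReal (measure_ne_top _ _)).symm
        _ ≤ _ := ENNReal.ofReal_le_ofReal h3
    -- first piece
    have hpiece1 : (∫⁻ t in Ioc (0:ℝ) x, (μ.restrict S) {a | t < W a})
        ≤ ENNReal.ofReal (C'' * (x / 2) ^ (-γ) * x) := by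
      have hb : ∀ t : ℝ, (μ.restrict S) {a | t < W a} ≤ μ S := by
        intro t
        rw [Measure.restrict_apply (measurableSet_lt measurable_const hWmeas)]
        exact measure_mono inter_subset_right
      calc (∫⁻ t in Ioc (0:ℝ) x, (μ.restrict S) {a | t < W a})
          ≤ ∫⁻ _ in Ioc (0:ℝ) x, μ S := lintegral_mono fun t => hb t
        _ = μ S * volume (Ioc (0:ℝ) x) := setLIntegral_const _ _
        _ ≤ ENNReal.ofReal (C'' * (x / 2) ^ (-γ)) * ENNReal.ofReal x := by
            rw [Real.volume_Ioc, sub_zero]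
            exact mul_le_mul_left hSbound _
        _ = ENNReal.ofReal (C'' * (x / 2) ^ (-γ) * x) := by
            rw [← ENNReal.ofReal_mul]
            positivity
    -- second piece
    have hpiece2 : (∫⁻ t in Ioi x, (μ.restrict S) {a | t < W a})
        ≤ ENNReal.ofReal (C'' / (γ - 1) * x ^ (-γ + 1)) := by
      have hbound : ∀ᵐ t ∂(volume.restrict (Ioi x)),
          (μ.restrict S) {a | t < W a} ≤ ENNReal.ofReal (C'' * t ^ (-γ)) := by
        refine (ae_restrict_iff' measurableSet_Ioi).2
          (Filter.Eventually.of_forall fun t ht => ?_)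
        have htx : x < t := ht
        have h4 : (μ.restrict S) {a | t < W a} ≤ μ {a | t < W a} := by
          rw [Measure.restrict_apply (measurableSet_lt measurable_const hWmeas)]
          exact measure_mono inter_subset_left
        have h5 : (μ {a | t < W a}).toReal ≤ C'' * t ^ (-γ) :=
          htail t (le_trans hx₀x (by linarith))
        calc (μ.restrict S) {a | t < W a} ≤ μ {a | t < W a} := h4
          _ = ENNReal.ofReal ((μ {a | t < W a}).toReal) :=
              (ENNReal.ofReal_toReal (measure_ne_top _ _)).symm
          _ ≤ _ := ENNReal.ofReal_le_ofReal h5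
      have hint : IntegrableOn (fun t : ℝ => C'' * t ^ (-γ)) (Ioi x) :=
        (integrableOn_Ioi_rpow_of_lt (by linarith) hx0).const_mul C''
      have hnn' : 0 ≤ᵐ[volume.restrict (Ioi x)] fun t : ℝ => C'' * t ^ (-γ) := by
        refine (ae_restrict_iff' measurableSet_Ioi).2
          (Filter.Eventually.of_forall fun t ht => ?_)
        have : (0:ℝ) < t := lt_trans hx0 ht
        positivity
      have heq : ∫⁻ t in Ioi x, ENNReal.ofReal (C'' * t ^ (-γ))
          = ENNReal.ofReal (∫ t in Ioi x, C'' * t ^ (-γ)) :=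
        (ofReal_integral_eq_lintegral_ofReal hint hnn').symm
      have hval : ∫ t in Ioi x, C'' * t ^ (-γ) = C'' / (γ - 1) * x ^ (-γ + 1) := by
        rw [integral_const_mul, integral_Ioi_rpow_of_lt (by linarith) hx0]
        have h1γ : -γ + 1 ≠ 0 := by intro h; linarith [h]
        have h2γ : γ - 1 ≠ 0 := by intro h; linarith [h]
        field_simp
        ring
      calc (∫⁻ t in Ioi x, (μ.restrict S) {a | t < W a})
          ≤ ∫⁻ t in Ioi x, ENNReal.ofReal (C'' * t ^ (-γ)) := lintegral_mono_ae hbound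
        _ = ENNReal.ofReal (C'' / (γ - 1) * x ^ (-γ + 1)) := by rw [heq, hval]
    -- combine
    have htotal : ∫⁻ a in S, ENNReal.ofReal (W a) ∂μ ≤ ENNReal.ofReal (K * x ^ (-γ + 1)) := by
      rw [h2, hsplit]
      have hKx : C'' * (x / 2) ^ (-γ) * x + C'' / (γ - 1) * x ^ (-γ + 1) = K * x ^ (-γ + 1) := by
        have hhalf : (x / 2) ^ (-γ) = 2 ^ γ * x ^ (-γ) := by
          rw [Real.div_rpow hx0.le (by norm_num : (0:ℝ) ≤ 2),
            Real.rpow_neg hx0.le, Real.rpow_neg (by norm_num : (0:ℝ) ≤ 2)]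
          field_simp
        have hxx : x ^ (-γ) * x = x ^ (-γ + 1) := by
          rw [Real.rpow_add hx0, Real.rpow_one]
        rw [hhalf]
        calc C'' * (2 ^ γ * x ^ (-γ)) * x + C'' / (γ - 1) * x ^ (-γ + 1)
            = 2 ^ γ * C'' * (x ^ (-γ) * x) + C'' / (γ - 1) * x ^ (-γ + 1) := by ring
          _ = K * x ^ (-γ + 1) := by rw [hxx, hKdef]; ring
      calc (∫⁻ t in Ioc (0:ℝ) x, (μ.restrict S) {a | t < W a})
            + ∫⁻ t in Ioi x, (μ.restrict S) {a | t < W a}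
          ≤ ENNReal.ofReal (C'' * (x / 2) ^ (-γ) * x)
            + ENNReal.ofReal (C'' / (γ - 1) * x ^ (-γ + 1)) := add_le_add hpiece1 hpiece2
        _ = ENNReal.ofReal (C'' * (x / 2) ^ (-γ) * x + C'' / (γ - 1) * x ^ (-γ + 1)) := by
            have hγ' : (0:ℝ) < γ - 1 := by linarith
            rw [← ENNReal.ofReal_add] <;> positivity
        _ = _ := by rw [hKx]
    have hfin : K * x ^ (-γ + 1) ≤ max K ((M + 1) * x₂ ^ (γ - 1)) * x ^ (-γ + 1) :=
      mul_le_mul_of_nonneg_right (le_max_left _ _) hxp.le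
    refine le_trans ?_ hfin
    rw [h1]
    calc (∫⁻ a in S, ENNReal.ofReal (W a) ∂μ).toReal
        ≤ (ENNReal.ofReal (K * x ^ (-γ + 1))).toReal :=
          ENNReal.toReal_mono ENNReal.ofReal_ne_top htotal
      _ = K * x ^ (-γ + 1) := ENNReal.toReal_ofReal (by positivity)
  · -- small x : crude bound by M
    push_neg at hcase
    have hcrude : ∫ a in S, W a ∂μ ≤ M := by
      calc ∫ a in S, W a ∂μ ≤ ∫ a in S, |W a| ∂μ := by
            refine setIntegral_mono_on hWint.integrableOn hWint.abs.integrableOn hSm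
              fun a _ => le_abs_self _
        _ ≤ ∫ a, |W a| ∂μ := by
            refine setIntegral_le_integral hWint.abs
              (Filter.Eventually.of_forall fun a => abs_nonneg _)
    have hmono : x₂ ^ (-γ + 1) ≤ x ^ (-γ + 1) :=
      Real.rpow_le_rpow_of_nonpos hx0 hcase.le (by linarith)
    have hprod : x₂ ^ (γ - 1) * x₂ ^ (-γ + 1) = 1 := by
      rw [← Real.rpow_add hx₂0]
      norm_num
    have : M ≤ (M + 1) * x₂ ^ (γ - 1) * x ^ (-γ + 1) := by
      have h6 : (M + 1) * x₂ ^ (γ - 1) * x₂ ^ (-γ + 1) = M + 1 := by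
        rw [mul_assoc, hprod, mul_one]
      have h7 : (M + 1) * x₂ ^ (γ - 1) * x₂ ^ (-γ + 1)
          ≤ (M + 1) * x₂ ^ (γ - 1) * x ^ (-γ + 1) := by
        have : (0:ℝ) ≤ (M + 1) * x₂ ^ (γ - 1) := by positivity
        exact mul_le_mul_of_nonneg_left hmono this
      linarith
    refine le_trans (le_trans hcrude this) ?_
    have h8 : (M + 1) * x₂ ^ (γ - 1) ≤ max K ((M + 1) * x₂ ^ (γ - 1)) := le_max_right _ _
    exact mul_le_mul_of_nonneg_right h8 hxp.le

theorem tilted_tail_estimates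
    {Ω : Type*} [MeasurableSpace Ω] (μ : Measure Ω) [IsProbabilityMeasure μ]
    (W : Ω → ℝ) (hWmeas : Measurable W)
    (hWlb : ∀ᵐ a ∂μ, -1 ≤ W a) (hWint : Integrable W μ) (hWmean : ∫ a, W a ∂μ = 0)
    (γ C' C'' x₀ : ℝ) (hγ1 : 1 < γ) (hγ2 : γ < 2) (hC' : 0 < C') (hC'' : 0 < C'')
    (hx₀ : 0 < x₀)
    (htail : ∀ x : ℝ, x₀ ≤ x →
      C' * x ^ (-γ) ≤ (μ {a | x < W a}).toReal ∧
      (μ {a | x < W a}).toReal ≤ C'' * x ^ (-γ)) :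
    ∃ C : ℝ, 0 < C ∧ ∀ β : ℝ, 0 < β → β < 1 → ∀ x : ℝ, β⁻¹ ≤ x →
      (1 / C) * β * x ^ (-γ + 1) ≤ ∫ a in {a | x ≤ W a}, (1 + β * W a) ∂μ ∧
      ∫ a in {a | x ≤ W a}, (1 + β * W a) ∂μ ≤ C * β * x ^ (-γ + 1) := by
  obtain ⟨D, hD, hDle⟩ := tail_integral_upper μ W hWmeas hWint γ C'' x₀ hγ1 hC'' hx₀
    (fun x hx => (htail x hx).2)
  set x₁ : ℝ := max 1 x₀ with hx₁def
  have hx₁1 : 1 ≤ x₁ := le_max_left _ _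
  have hx₁0 : 0 < x₁ := lt_of_lt_of_le one_pos hx₁1
  set c : ℝ := C' * x₁ ^ (-γ) with hcdef
  have hcpos : 0 < c := by
    have := Real.rpow_pos_of_pos hx₁0 (-γ); positivity
  refine ⟨max (1 / c) (2 * D), lt_max_of_lt_left (by positivity), ?_⟩
  set C : ℝ := max (1 / c) (2 * D) with hCdef
  have hCpos : 0 < C := lt_max_of_lt_left (by positivity)
  intro β hβ0 hβ1 x hxβ
  have hβx1 : (1:ℝ) < β⁻¹ := by
    nlinarith [mul_pos (sub_pos.2 hβ1) (inv_pos.2 hβ0), mul_inv_cancel₀ hβ0.ne']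
  have hx1 : 1 ≤ x := le_trans hβx1.le hxβ
  have hx0 : 0 < x := lt_of_lt_of_le one_pos hx1
  have hxp : 0 < x ^ (-γ + 1) := Real.rpow_pos_of_pos hx0 _
  set S : Set Ω := {a | x ≤ W a} with hSdef
  have hSm : MeasurableSet S := measurableSet_le measurable_const hWmeas
  have hintS : IntegrableOn (fun a => 1 + β * W a) S μ :=
    ((integrable_const (1:ℝ)).add (hWint.const_mul β)).integrableOn
  constructor
  · -- lower bound
    set y : ℝ := max x x₀ with hydef
    have hyx : x ≤ y := le_max_left _ _
    have hyx₀ : x₀ ≤ y := le_max_right _ _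
    have hy0 : 0 < y := lt_of_lt_of_le hx0 hyx
    set T : Set Ω := {a | y < W a} with hTdef
    have hTm : MeasurableSet T := measurableSet_lt measurable_const hWmeas
    have hTS : T ⊆ S := fun a ha => le_trans hyx (le_of_lt ha)
    have hnnS : 0 ≤ᵐ[μ.restrict S] fun a => 1 + β * W a := by
      refine ae_restrict_of_ae ?_
      filter_upwards [hWlb] with a ha
      simp only [Pi.zero_apply]
      have h12 : β * (-1) ≤ β * W a := mul_le_mul_of_nonneg_left ha hβ0.le
      linarith
    have step1 : ∫ a in T, (1 + β * W a) ∂μ ≤ ∫ a in S, (1 + β * W a) ∂μ :=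
      setIntegral_mono_set hintS hnnS (HasSubset.Subset.eventuallyLE hTS)
    have step2 : (μ T).toReal * (β * x) ≤ ∫ a in T, (1 + β * W a) ∂μ := by
      have := setIntegral_const (μ := μ) (s := T) (β * x)
      calc (μ T).toReal * (β * x) = ∫ _ in T, (β * x) ∂μ := by
            rw [setIntegral_const]; simp [smul_eq_mul, Measure.real]
        _ ≤ ∫ a in T, (1 + β * W a) ∂μ := by
            refine setIntegral_mono_on (integrableOn_const (measure_ne_top _ _))
              (hintS.mono_set hTS) hTm fun a ha => ?_
            have hW : y < W a := ha
            have h13 : β * x ≤ β * W a :=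
              mul_le_mul_of_nonneg_left (le_trans hyx hW.le) hβ0.le
            linarith
    have hmeas : C' * y ^ (-γ) ≤ (μ T).toReal := (htail y hyx₀).1
    have hkey : c * (β * x ^ (-γ + 1)) ≤ ∫ a in S, (1 + β * W a) ∂μ := by
      refine le_trans ?_ (le_trans step2 step1)
      -- c * β * x^{-γ+1} ≤ (μ T).toReal * (β x)
      have h8 : C' * y ^ (-γ) * (β * x) ≤ (μ T).toReal * (β * x) :=
        mul_le_mul_of_nonneg_right hmeas (by positivity)
      refine le_trans ?_ h8
      rcases le_total x₀ x with hxx₀ | hxx₀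
      · -- y = x
        have hyeq : y = x := max_eq_left hxx₀
        rw [hyeq]
        have hxx : x ^ (-γ) * x = x ^ (-γ + 1) := by
          rw [Real.rpow_add hx0, Real.rpow_one]
        have hx₁le : x₁ ^ (-γ) ≤ 1 := Real.rpow_le_one_of_one_le_of_nonpos hx₁1 (by linarith)
        calc c * (β * x ^ (-γ + 1)) ≤ C' * (β * x ^ (-γ + 1)) := by
              have h14 : c ≤ C' := by
                rw [hcdef]
                nlinarith [Real.rpow_pos_of_pos hx₁0 (-γ)]
              exact mul_le_mul_of_nonneg_right h14 (by positivity)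
          _ = C' * x ^ (-γ) * (β * x) := by rw [← hxx]; ring
      · -- y = x₀
        have hyeq : y = x₀ := max_eq_right hxx₀
        rw [hyeq]
        have hxle : x ^ (-γ + 1) ≤ 1 := Real.rpow_le_one_of_one_le_of_nonpos hx1 (by linarith)
        have hx₀₁ : x₀ ^ (-γ) ≥ x₁ ^ (-γ) :=
          Real.rpow_le_rpow_of_nonpos hx₀ (le_max_right _ _) (by linarith)
        have h9 : c ≤ C' * x₀ ^ (-γ) := by
          rw [hcdef]; exact mul_le_mul_of_nonneg_left hx₀₁ hC'.le
        have h10 : x ^ (-γ + 1) ≤ x := le_trans hxle hx1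
        have hpos : (0:ℝ) < C' * x₀ ^ (-γ) := by
          have := Real.rpow_pos_of_pos hx₀ (-γ); positivity
        calc c * (β * x ^ (-γ + 1)) ≤ C' * x₀ ^ (-γ) * (β * x ^ (-γ + 1)) :=
              mul_le_mul_of_nonneg_right h9 (by positivity)
          _ ≤ C' * x₀ ^ (-γ) * (β * x) := by
              refine mul_le_mul_of_nonneg_left ?_ hpos.le
              exact mul_le_mul_of_nonneg_left h10 hβ0.le
    have hCc : 1 / C ≤ c := by
      rw [div_le_iff₀ hCpos]
      have : 1 / c ≤ C := le_max_left _ _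
      calc (1:ℝ) = c * (1 / c) := by field_simp
        _ ≤ c * C := mul_le_mul_of_nonneg_left this hcpos.le
    calc (1 / C) * β * x ^ (-γ + 1) = (1 / C) * (β * x ^ (-γ + 1)) := by ring
      _ ≤ c * (β * x ^ (-γ + 1)) := mul_le_mul_of_nonneg_right hCc (by positivity)
      _ ≤ _ := hkey
  · -- upper bound
    have hxββ : 1 ≤ β * x := by
      rw [← mul_inv_cancel₀ (ne_of_gt hβ0)]
      exact mul_le_mul_of_nonneg_left hxβ hβ0.le
    have step1 : ∫ a in S, (1 + β * W a) ∂μ ≤ ∫ a in S, 2 * β * W a ∂μ := by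
      refine setIntegral_mono_on hintS ((hWint.const_mul (2 * β)).integrableOn) hSm
        fun a ha => ?_
      have hW : x ≤ W a := ha
      have h11 : β * x ≤ β * W a := mul_le_mul_of_nonneg_left hW hβ0.le
      have h12 : 1 ≤ β * W a := le_trans hxββ h11
      linarith
    have step2 : ∫ a in S, 2 * β * W a ∂μ = 2 * β * ∫ a in S, W a ∂μ := by
      rw [integral_const_mul]
    have step3 : ∫ a in S, W a ∂μ ≤ D * x ^ (-γ + 1) := hDle x hx1
    calc ∫ a in S, (1 + β * W a) ∂μ ≤ 2 * β * ∫ a in S, W a ∂μ := by rw [← step2]; exact step1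
      _ ≤ 2 * β * (D * x ^ (-γ + 1)) :=
          mul_le_mul_of_nonneg_left step3 (by positivity)
      _ = 2 * D * (β * x ^ (-γ + 1)) := by ring
      _ ≤ C * (β * x ^ (-γ + 1)) :=
          mul_le_mul_of_nonneg_right (le_max_right _ _) (by positivity)
      _ = C * β * x ^ (-γ + 1) := by ring
end

section
/- Let ω = {ω_{n,z}} be IID, ω ≥ −1 a.s., E[ω] = 0, E[|ω|^{1+q}] < ∞ for some q ∈ (0,1). For β ∈ (0,1) define the polymer partition function Z_N^{β,ω} = E_RW[∏_{i=1}^N (1+βω_{i,S_i})] and p_N(β) = (1/N) E[log Z_N^{β,ω}] (assume log Z_N is integrable). Then β ↦ p_N(β) is non-increasing on (0,1). -/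
open MeasureTheory ProbabilityTheory Finset

/-- The displacement of a single step of the simple random walk. -/
def srwStep (d : ℕ) (e : Fin d × Bool) : Fin d → ℤ :=
  fun i => if i = e.1 then (if e.2 then 1 else -1) else 0

/-- Position at time `n` of the nearest-neighbour path on `ℤ^d` started at `0`. -/
def srwPos {d N : ℕ} (σ : Fin N → Fin d × Bool) (n : ℕ) : Fin d → ℤ :=
  ∑ k ∈ Finset.univ.filter (fun k : Fin N => (k : ℕ) < n), srwStep d (σ k)

/-- The normalized partition function of the directed polymer. -/
noncomputable def polymerZ {Ω : Type*} (d : ℕ) (β : ℝ)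
    (η : ℕ → (Fin d → ℤ) → Ω → ℝ) (N : ℕ) (a : Ω) : ℝ :=
  (1 / (2 * d) : ℝ) ^ N * ∑ σ : Fin N → Fin d × Bool,
    ∏ n ∈ Finset.range N, (1 + β * η (n + 1) (srwPos σ (n + 1)) a)

namespace PolymerProof

noncomputable section

abbrev Site (d : ℕ) := ℕ × (Fin d → ℤ)

/-- The site visited at step `n` (occupied at time `n+1`). -/
def site {d N : ℕ} (σ : Fin N → Fin d × Bool) (n : ℕ) : Site d :=
  (n + 1, srwPos σ (n + 1))

/-- Generalized (site-dependent inverse temperature) partition function,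
as a function of the environment `e`. -/
def Fenv (d N : ℕ) (f e : Site d → ℝ) : ℝ :=
  (1 / (2 * d) : ℝ) ^ N * ∑ σ : Fin N → Fin d × Bool,
    ∏ n ∈ Finset.range N, (1 + f (site σ n) * e (site σ n))

/-- Whether the path `σ` visits site `s`. -/
def hit (d N : ℕ) (s : Site d) (σ : Fin N → Fin d × Bool) : Prop :=
  s.1 - 1 ∈ Finset.range N ∧ srwPos σ s.1 = s.2

instance (d N : ℕ) (s : Site d) : DecidablePred (hit d N s) := fun σ => by
  unfold hit; infer_instance

def Aenv (d N : ℕ) (s : Site d) (f e : Site d → ℝ) : ℝ :=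
  (1 / (2 * d) : ℝ) ^ N * ∑ σ ∈ Finset.univ.filter (hit d N s),
    ∏ n ∈ (Finset.range N).erase (s.1 - 1), (1 + f (site σ n) * e (site σ n))

def Benv (d N : ℕ) (s : Site d) (f e : Site d → ℝ) : ℝ :=
  (1 / (2 * d) : ℝ) ^ N * ∑ σ ∈ Finset.univ.filter (fun σ => ¬ hit d N s σ),
    ∏ n ∈ Finset.range N, (1 + f (site σ n) * e (site σ n))

/-- All sites that can possibly be read by `Fenv`. -/
def Tall (d N : ℕ) : Finset (Site d) :=
  Finset.image (fun q : (Fin N → Fin d × Bool) × Fin N => site q.1 (q.2 : ℕ)) Finset.univ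

variable {d N : ℕ}

lemma site_mem_Tall (σ : Fin N → Fin d × Bool) {n : ℕ} (hn : n ∈ Finset.range N) :
    site σ n ∈ Tall d N := by
  rw [Finset.mem_range] at hn
  exact Finset.mem_image.2 ⟨(σ, ⟨n, hn⟩), Finset.mem_univ _, rfl⟩

lemma Tall_fst_pos {s : Site d} (hs : s ∈ Tall d N) : 1 ≤ s.1 := by
  rcases Finset.mem_image.1 hs with ⟨q, -, rfl⟩
  exact Nat.succ_le_succ (Nat.zero_le _)

/-- The key pointwise inequality. -/
lemma key_log_ineq {A B x c₁ c₂ : ℝ} (hA : 0 ≤ A) (hB : 0 ≤ B) (hAB : 0 < A + B)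
    (hc₀ : 0 ≤ c₁) (hc : c₁ ≤ c₂) (h₁ : 0 < 1 + c₁ * x) (h₂ : 0 < 1 + c₂ * x) :
    Real.log ((1 + c₂ * x) * A + B) - Real.log ((1 + c₁ * x) * A + B)
      ≤ (c₂ - c₁) * x * (A / (A + B)) := by
  have hu₁ : 0 < (1 + c₁ * x) * A + B := by
    rcases hA.eq_or_lt with h | h
    · simpa [← h] using hAB
    · exact add_pos_of_pos_of_nonneg (mul_pos h₁ h) hB
  have hu₂ : 0 < (1 + c₂ * x) * A + B := by
    rcases hA.eq_or_lt with h | h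
    · simpa [← h] using hAB
    · exact add_pos_of_pos_of_nonneg (mul_pos h₂ h) hB
  have hlog : Real.log ((1 + c₂ * x) * A + B) - Real.log ((1 + c₁ * x) * A + B)
      ≤ ((1 + c₂ * x) * A + B) / ((1 + c₁ * x) * A + B) - 1 := by
    rw [← Real.log_div hu₂.ne' hu₁.ne']
    exact Real.log_le_sub_one_of_pos (div_pos hu₂ hu₁)
  refine hlog.trans ?_
  have heq : ((1 + c₂ * x) * A + B) / ((1 + c₁ * x) * A + B) - 1
      = ((c₂ - c₁) * x * A) / ((1 + c₁ * x) * A + B) := by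
    rw [div_sub_one hu₁.ne']
    ring
  have heq2 : (c₂ - c₁) * x * (A / (A + B)) = ((c₂ - c₁) * x * A) / (A + B) := by
    rw [mul_div_assoc]
  rw [heq, heq2, div_le_div_iff₀ hu₁ hAB]
  nlinarith [mul_nonneg (mul_nonneg (sub_nonneg.2 hc) hc₀)
    (mul_nonneg (sq_nonneg x) (sq_nonneg A))]

lemma site_ne_of_ne {s : Site d} (hs : 1 ≤ s.1) {σ : Fin N → Fin d × Bool} {n : ℕ}
    (hn : n ≠ s.1 - 1) : site σ n ≠ s := by
  intro h
  apply hn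
  have : n + 1 = s.1 := congrArg Prod.fst h
  omega

lemma site_eq_of_hit {s : Site d} (hs : 1 ≤ s.1) {σ : Fin N → Fin d × Bool}
    (h : hit d N s σ) : site σ (s.1 - 1) = s := by
  have h1 : s.1 - 1 + 1 = s.1 := by omega
  unfold site
  rw [h1, h.2]

lemma site_ne_of_not_hit {s : Site d} {σ : Fin N → Fin d × Bool}
    (h : ¬ hit d N s σ) {n : ℕ} (hn : n ∈ Finset.range N) : site σ n ≠ s := by
  intro he
  apply h
  have h1 : n + 1 = s.1 := congrArg Prod.fst he
  have h2 : srwPos σ (n + 1) = s.2 := congrArg Prod.snd he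
  constructor
  · have : s.1 - 1 = n := by omega
    rwa [this]
  · rwa [h1] at h2

/-- Decomposition of `Fenv` at a single site. -/
lemma Fenv_decomp (s : Site d) (hs : 1 ≤ s.1) (f e : Site d → ℝ) (c : ℝ) :
    Fenv d N (Function.update f s c) e = (1 + c * e s) * Aenv d N s f e + Benv d N s f e := by
  classical
  unfold Fenv Aenv Benv
  have hhit : ∑ σ ∈ Finset.univ.filter (hit d N s),
      ∏ n ∈ Finset.range N, (1 + Function.update f s c (site σ n) * e (site σ n))
      = (1 + c * e s) * ∑ σ ∈ Finset.univ.filter (hit d N s),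
        ∏ n ∈ (Finset.range N).erase (s.1 - 1), (1 + f (site σ n) * e (site σ n)) := by
    rw [Finset.mul_sum]
    apply Finset.sum_congr rfl
    intro σ hσ
    rw [Finset.mem_filter] at hσ
    have hmem : s.1 - 1 ∈ Finset.range N := hσ.2.1
    have hsite : site σ (s.1 - 1) = s := site_eq_of_hit hs hσ.2
    rw [← Finset.mul_prod_erase (Finset.range N)
      (fun n => (1 + Function.update f s c (site σ n) * e (site σ n))) hmem]
    congr 1
    · rw [hsite, Function.update_self]
    · apply Finset.prod_congr rfl
      intro n hn
      have hne : site σ n ≠ s := site_ne_of_ne hs (Finset.ne_of_mem_erase hn)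
      rw [Function.update_of_ne hne]
  have hnot : ∑ σ ∈ Finset.univ.filter (fun σ => ¬ hit d N s σ),
      ∏ n ∈ Finset.range N, (1 + Function.update f s c (site σ n) * e (site σ n))
      = ∑ σ ∈ Finset.univ.filter (fun σ => ¬ hit d N s σ),
        ∏ n ∈ Finset.range N, (1 + f (site σ n) * e (site σ n)) := by
    apply Finset.sum_congr rfl
    intro σ hσ
    rw [Finset.mem_filter] at hσ
    apply Finset.prod_congr rfl
    intro n hn
    rw [Function.update_of_ne (site_ne_of_not_hit hσ.2 hn)]
  rw [← Finset.sum_filter_add_sum_filter_not Finset.univ (hit d N s), hhit, hnot]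
  ring

lemma factor_lb {β₂ c x : ℝ} (hc0 : 0 ≤ c) (hc2 : c ≤ β₂) (hx : -1 ≤ x) :
    1 - β₂ ≤ 1 + c * x := by nlinarith

lemma twod_pos (hd : 1 ≤ d) : (0:ℝ) < 2 * d := by positivity

lemma card_paths : (Fintype.card (Fin N → Fin d × Bool) : ℝ) = (2 * d) ^ N := by
  simp [Fintype.card_fun]
  ring

/-- Lower bound for `Fenv`. -/
lemma le_Fenv {β₂ : ℝ} (hd : 1 ≤ d) (hβ₂ : β₂ ≤ 1) {f e : Site d → ℝ}
    (hf : ∀ p, 0 ≤ f p ∧ f p ≤ β₂)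
    (he : ∀ p ∈ Tall d N, -1 ≤ e p) :
    (1 - β₂) ^ N ≤ Fenv d N f e := by
  have hterm : ∀ σ : Fin N → Fin d × Bool,
      (1 - β₂) ^ N ≤ ∏ n ∈ Finset.range N, (1 + f (site σ n) * e (site σ n)) := by
    intro σ
    calc (1 - β₂) ^ N = ∏ _n ∈ Finset.range N, (1 - β₂) := by
          rw [Finset.prod_const, Finset.card_range]
      _ ≤ _ := by
          apply Finset.prod_le_prod
          · intro n hn; linarith
          · intro n hn
            exact factor_lb (hf _).1 (hf _).2 (he _ (site_mem_Tall σ hn))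
  have hsum : (Fintype.card (Fin N → Fin d × Bool) : ℝ) * (1 - β₂) ^ N
      ≤ ∑ σ : Fin N → Fin d × Bool, ∏ n ∈ Finset.range N, (1 + f (site σ n) * e (site σ n)) := by
    rw [← nsmul_eq_mul]
    exact Finset.card_nsmul_le_sum Finset.univ _ _ (fun σ _ => hterm σ)
  unfold Fenv
  have hw : (0:ℝ) < 2 * d := twod_pos hd
  calc (1 - β₂) ^ N = (1 / (2 * d) : ℝ) ^ N * ((2 * d) ^ N * (1 - β₂) ^ N) := by
        rw [← mul_assoc, ← mul_pow]
        field_simp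
        rw [one_pow, mul_one]
    _ ≤ _ := by
        apply mul_le_mul_of_nonneg_left _ (by positivity)
        rw [← card_paths (d := d) (N := N)]
        exact hsum

lemma Fenv_pos {β₂ : ℝ} (hd : 1 ≤ d) (hβ₂ : β₂ < 1) {f e : Site d → ℝ}
    (hf : ∀ p, 0 ≤ f p ∧ f p ≤ β₂)
    (he : ∀ p ∈ Tall d N, -1 ≤ e p) :
    0 < Fenv d N f e :=
  lt_of_lt_of_le (pow_pos (by linarith) N) (le_Fenv hd hβ₂.le hf he)

/-- Upper bound for `Fenv` by a product over all sites. -/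
lemma Fenv_le {β₂ : ℝ} (hd : 1 ≤ d) (hβ₂ : β₂ ≤ 1) {f e : Site d → ℝ}
    (hf : ∀ p, 0 ≤ f p ∧ f p ≤ β₂)
    (he : ∀ p ∈ Tall d N, -1 ≤ e p) :
    Fenv d N f e ≤ ∏ p ∈ Tall d N, (1 + |e p|) := by
  have hw : (0:ℝ) < 2 * d := twod_pos hd
  set P := ∏ p ∈ Tall d N, (1 + |e p|) with hP
  have hterm : ∀ σ : Fin N → Fin d × Bool,
      ∏ n ∈ Finset.range N, (1 + f (site σ n) * e (site σ n)) ≤ P := by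
    intro σ
    have step1 : ∏ n ∈ Finset.range N, (1 + f (site σ n) * e (site σ n))
        ≤ ∏ n ∈ Finset.range N, (1 + |e (site σ n)|) := by
      apply Finset.prod_le_prod
      · intro n hn
        have := factor_lb (hf (site σ n)).1 (hf _).2 (he _ (site_mem_Tall σ hn))
        linarith
      · intro n hn
        have h1 : f (site σ n) * e (site σ n) ≤ |e (site σ n)| := by
          calc f (site σ n) * e (site σ n) ≤ |f (site σ n) * e (site σ n)| := le_abs_self _
            _ = f (site σ n) * |e (site σ n)| := by
                rw [abs_mul, abs_of_nonneg (hf _).1]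
            _ ≤ 1 * |e (site σ n)| := by
                apply mul_le_mul_of_nonneg_right _ (abs_nonneg _)
                linarith [(hf (site σ n)).2]
            _ = |e (site σ n)| := one_mul _
        linarith
    have hinj : Set.InjOn (site σ) (Finset.range N : Set ℕ) := by
      intro a _ b _ hab
      have : a + 1 = b + 1 := congrArg Prod.fst hab
      omega
    have step2 : ∏ p ∈ (Finset.range N).image (site σ), (1 + |e p|)
        = ∏ n ∈ Finset.range N, (1 + |e (site σ n)|) :=
      Finset.prod_image (fun a ha b hb h => hinj ha hb h)
    have hsub : (Finset.range N).image (site σ) ⊆ Tall d N := by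
      intro p hp
      rcases Finset.mem_image.1 hp with ⟨n, hn, rfl⟩
      exact site_mem_Tall σ hn
    have step3 : ∏ p ∈ (Finset.range N).image (site σ), (1 + |e p|) ≤ P := by
      rw [hP, ← Finset.prod_sdiff hsub]
      have h1 : (1:ℝ) ≤ ∏ p ∈ Tall d N \ (Finset.range N).image (site σ), (1 + |e p|) := by
        have := Finset.prod_le_prod (s := Tall d N \ (Finset.range N).image (site σ))
          (f := fun _ => (1:ℝ)) (g := fun p => 1 + |e p|)
          (fun i _ => zero_le_one) (fun i _ => by simpa using abs_nonneg (e i))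
        simpa using this
      have h2 : (0:ℝ) ≤ ∏ p ∈ (Finset.range N).image (site σ), (1 + |e p|) :=
        Finset.prod_nonneg (fun i _ => by have := abs_nonneg (e i); linarith)
      exact le_mul_of_one_le_left h2 h1
    calc _ ≤ _ := step1
      _ = _ := step2.symm
      _ ≤ _ := step3
  have hsum : ∑ σ : Fin N → Fin d × Bool, ∏ n ∈ Finset.range N,
      (1 + f (site σ n) * e (site σ n)) ≤ (Fintype.card (Fin N → Fin d × Bool) : ℝ) * P := by
    rw [← nsmul_eq_mul]
    exact Finset.sum_le_card_nsmul Finset.univ _ _ (fun σ _ => hterm σ)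
  unfold Fenv
  calc (1 / (2 * d) : ℝ) ^ N * ∑ σ : Fin N → Fin d × Bool, ∏ n ∈ Finset.range N,
        (1 + f (site σ n) * e (site σ n))
      ≤ (1 / (2 * d) : ℝ) ^ N * ((Fintype.card (Fin N → Fin d × Bool) : ℝ) * P) :=
        mul_le_mul_of_nonneg_left hsum (by positivity)
    _ = P := by
        rw [card_paths (d := d) (N := N), ← mul_assoc, ← mul_pow]
        field_simp
        rw [one_pow, one_mul]

lemma Aenv_nonneg {β₂ : ℝ} (hβ₂ : β₂ ≤ 1) {s : Site d} {f e : Site d → ℝ}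
    (hf : ∀ p, 0 ≤ f p ∧ f p ≤ β₂)
    (he : ∀ p ∈ Tall d N, -1 ≤ e p) :
    0 ≤ Aenv d N s f e := by
  unfold Aenv
  apply mul_nonneg (by positivity)
  apply Finset.sum_nonneg
  intro σ _
  apply Finset.prod_nonneg
  intro n hn
  have := factor_lb (hf (site σ n)).1 (hf _).2
    (he _ (site_mem_Tall σ (Finset.mem_of_mem_erase hn)))
  linarith

lemma Benv_nonneg {β₂ : ℝ} (hβ₂ : β₂ ≤ 1) {s : Site d} {f e : Site d → ℝ}
    (hf : ∀ p, 0 ≤ f p ∧ f p ≤ β₂)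
    (he : ∀ p ∈ Tall d N, -1 ≤ e p) :
    0 ≤ Benv d N s f e := by
  unfold Benv
  apply mul_nonneg (by positivity)
  apply Finset.sum_nonneg
  intro σ _
  apply Finset.prod_nonneg
  intro n hn
  have := factor_lb (hf (site σ n)).1 (hf _).2 (he _ (site_mem_Tall σ hn))
  linarith

/-- `Fenv` only depends on `f` through the sites in `Tall`. -/
lemma Fenv_congr_f {f₁ f₂ e : Site d → ℝ} (h : ∀ p ∈ Tall d N, f₁ p = f₂ p) :
    Fenv d N f₁ e = Fenv d N f₂ e := by
  unfold Fenv
  congr 1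
  apply Finset.sum_congr rfl
  intro σ _
  apply Finset.prod_congr rfl
  intro n hn
  rw [h _ (site_mem_Tall σ hn)]

lemma Aenv_congr_e {s : Site d} (hs : 1 ≤ s.1) {f e₁ e₂ : Site d → ℝ}
    (h : ∀ p ∈ (Tall d N).erase s, e₁ p = e₂ p) :
    Aenv d N s f e₁ = Aenv d N s f e₂ := by
  unfold Aenv
  congr 1
  apply Finset.sum_congr rfl
  intro σ _
  apply Finset.prod_congr rfl
  intro n hn
  have hmem : site σ n ∈ (Tall d N).erase s :=
    Finset.mem_erase.2 ⟨site_ne_of_ne hs (Finset.ne_of_mem_erase hn),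
      site_mem_Tall σ (Finset.mem_of_mem_erase hn)⟩
  rw [h _ hmem]

lemma Benv_congr_e {s : Site d} {f e₁ e₂ : Site d → ℝ}
    (h : ∀ p ∈ (Tall d N).erase s, e₁ p = e₂ p) :
    Benv d N s f e₁ = Benv d N s f e₂ := by
  unfold Benv
  congr 1
  apply Finset.sum_congr rfl
  intro σ hσ
  rw [Finset.mem_filter] at hσ
  apply Finset.prod_congr rfl
  intro n hn
  have hmem : site σ n ∈ (Tall d N).erase s :=
    Finset.mem_erase.2 ⟨site_ne_of_not_hit hσ.2 hn, site_mem_Tall σ hn⟩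
  rw [h _ hmem]

section Measurable

variable {α : Type*} [MeasurableSpace α]

lemma measurable_Fenv (f : Site d → ℝ) {e : Site d → α → ℝ}
    (he : ∀ p, Measurable (e p)) :
    Measurable (fun x => Fenv d N f (fun p => e p x)) := by
  unfold Fenv
  apply Measurable.const_mul
  apply Finset.measurable_sum
  intro σ _
  apply Finset.measurable_prod
  intro n _
  exact ((he _).const_mul _).const_add 1

lemma measurable_Aenv (s : Site d) (f : Site d → ℝ) {e : Site d → α → ℝ}
    (he : ∀ p, Measurable (e p)) :
    Measurable (fun x => Aenv d N s f (fun p => e p x)) := by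
  unfold Aenv
  apply Measurable.const_mul
  apply Finset.measurable_sum
  intro σ _
  apply Finset.measurable_prod
  intro n _
  exact ((he _).const_mul _).const_add 1

lemma measurable_Benv (s : Site d) (f : Site d → ℝ) {e : Site d → α → ℝ}
    (he : ∀ p, Measurable (e p)) :
    Measurable (fun x => Benv d N s f (fun p => e p x)) := by
  unfold Benv
  apply Measurable.const_mul
  apply Finset.measurable_sum
  intro σ _
  apply Finset.measurable_prod
  intro n _
  exact ((he _).const_mul _).const_add 1

end Measurable

section Probability

variable {Ω : Type*} {m : MeasurableSpace Ω} {μ : Measure Ω} [IsProbabilityMeasure μ]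
variable {η : ℕ → (Fin d → ℤ) → Ω → ℝ}

/-- The environment seen from `a`. -/
abbrev envOf (η : ℕ → (Fin d → ℤ) → Ω → ℝ) (a : Ω) : Site d → ℝ := fun p => η p.1 p.2 a

lemma integrable_eta (hmeas : ∀ n z, Measurable (η n z)) {q : ℝ} (hq0 : 0 < q)
    (hmom : ∀ n z, Integrable (fun a => |η n z a| ^ (1 + q)) μ) (n : ℕ) (z : Fin d → ℤ) :
    Integrable (η n z) μ := by
  apply Integrable.mono' ((integrable_const (1:ℝ)).add (hmom n z))
    (hmeas n z).aestronglyMeasurable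
  filter_upwards with a
  simp only [Pi.add_apply, Real.norm_eq_abs]
  rcases le_or_gt (|η n z a|) 1 with h | h
  · have : (0:ℝ) ≤ |η n z a| ^ (1 + q) := Real.rpow_nonneg (abs_nonneg _) _
    linarith
  · have h2 : |η n z a| ^ (1:ℝ) ≤ |η n z a| ^ (1 + q) :=
      Real.rpow_le_rpow_of_exponent_le h.le (by linarith)
    rw [Real.rpow_one] at h2
    linarith

lemma integrable_prod_env (hmeas : ∀ n z, Measurable (η n z))
    (hindep : iIndepFun
      (fun p : ℕ × (Fin d → ℤ) => η p.1 p.2) μ)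
    {q : ℝ} (hq0 : 0 < q)
    (hmom : ∀ n z, Integrable (fun a => |η n z a| ^ (1 + q)) μ)
    (F : Finset (Site d)) :
    Integrable (fun a => ∏ p ∈ F, (1 + |η p.1 p.2 a|)) μ := by
  classical
  have hgmeas : ∀ p : Site d, Measurable (fun a => 1 + |η p.1 p.2 a|) :=
    fun p => (hmeas p.1 p.2).abs.const_add 1
  have hgindep : iIndepFun
      (fun p : Site d => fun a => 1 + |η p.1 p.2 a|) μ :=
    hindep.comp (fun _ => fun x : ℝ => 1 + |x|) (fun _ => measurable_abs.const_add 1)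
  have hgint : ∀ p : Site d, Integrable (fun a => 1 + |η p.1 p.2 a|) μ :=
    fun p => (integrable_const (1:ℝ)).add (integrable_eta hmeas hq0 hmom p.1 p.2).abs
  induction F using Finset.induction_on with
  | empty => simpa using integrable_const (1:ℝ)
  | @insert p F hp ih =>
    have hIF : IndepFun (∏ j ∈ F, (fun a => 1 + |η j.1 j.2 a|))
        (fun a => 1 + |η p.1 p.2 a|) μ :=
      hgindep.indepFun_finsetProd_of_notMem hgmeas hp
    have hint : Integrable ((∏ j ∈ F, (fun a => 1 + |η j.1 j.2 a|))
        * (fun a => 1 + |η p.1 p.2 a|)) μ := by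
      apply hIF.integrable_mul _ (hgint p)
      have : (∏ j ∈ F, (fun a : Ω => 1 + |η j.1 j.2 a|))
          = fun a => ∏ p ∈ F, (1 + |η p.1 p.2 a|) := by
        funext a
        rw [Finset.prod_apply]
      rw [this]
      exact ih
    have heq : (fun a => ∏ p ∈ insert p F, (1 + |η p.1 p.2 a|))
        = (∏ j ∈ F, (fun a : Ω => 1 + |η j.1 j.2 a|)) * (fun a => 1 + |η p.1 p.2 a|) := by
      funext a
      rw [Pi.mul_apply, Finset.prod_apply, Finset.prod_insert hp]
      ring
    rw [heq]
    exact hint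

lemma ae_env_ge (hlb : ∀ n z, ∀ᵐ a ∂μ, -1 ≤ η n z a) :
    ∀ᵐ a ∂μ, ∀ p ∈ Tall d N, -1 ≤ η p.1 p.2 a := by
  have h := (ae_ball_iff (Tall d N).countable_toSet).2
    (fun (p : Site d) (_ : p ∈ (↑(Tall d N) : Set (Site d))) => hlb p.1 p.2)
  filter_upwards [h] with a ha p hp
  exact ha p (Finset.mem_coe.2 hp)

lemma integrable_log_Fenv (hd : 1 ≤ d) (hmeas : ∀ n z, Measurable (η n z))
    (hindep : iIndepFun
      (fun p : ℕ × (Fin d → ℤ) => η p.1 p.2) μ)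
    (hlb : ∀ n z, ∀ᵐ a ∂μ, -1 ≤ η n z a)
    {q : ℝ} (hq0 : 0 < q)
    (hmom : ∀ n z, Integrable (fun a => |η n z a| ^ (1 + q)) μ)
    {β₂ : ℝ} (hβ₂ : β₂ < 1) {f : Site d → ℝ} (hf : ∀ p, 0 ≤ f p ∧ f p ≤ β₂) :
    Integrable (fun a => Real.log (Fenv d N f (envOf η a))) μ := by
  have hPint : Integrable (fun a => ∏ p ∈ Tall d N, (1 + |η p.1 p.2 a|)) μ :=
    integrable_prod_env hmeas hindep hq0 hmom (Tall d N)
  apply Integrable.mono'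
    (g := fun a => (N : ℝ) * |Real.log (1 - β₂)| + ∏ p ∈ Tall d N, (1 + |η p.1 p.2 a|))
    ((integrable_const _).add hPint)
  · exact (Real.measurable_log.comp
      (measurable_Fenv f (fun p => hmeas p.1 p.2))).aestronglyMeasurable
  · filter_upwards [ae_env_ge (N := N) hlb] with a ha
    have h1 : (1 - β₂) ^ N ≤ Fenv d N f (envOf η a) := le_Fenv hd hβ₂.le hf ha
    have h2 : Fenv d N f (envOf η a) ≤ ∏ p ∈ Tall d N, (1 + |η p.1 p.2 a|) :=
      Fenv_le hd hβ₂.le hf ha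
    have hbpos : (0:ℝ) < 1 - β₂ := by linarith
    have hFpos : 0 < Fenv d N f (envOf η a) := lt_of_lt_of_le (pow_pos hbpos N) h1
    have hPpos : (0:ℝ) < ∏ p ∈ Tall d N, (1 + |η p.1 p.2 a|) := lt_of_lt_of_le hFpos h2
    have hup : Real.log (Fenv d N f (envOf η a))
        ≤ ∏ p ∈ Tall d N, (1 + |η p.1 p.2 a|) - 1 :=
      le_trans (Real.log_le_log hFpos h2) (Real.log_le_sub_one_of_pos hPpos)
    have hlow : (N : ℝ) * Real.log (1 - β₂) ≤ Real.log (Fenv d N f (envOf η a)) := by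
      have := Real.log_le_log (pow_pos hbpos N) h1
      rwa [Real.log_pow] at this
    rw [Real.norm_eq_abs]
    rw [abs_le]
    constructor
    · have hh : -((N:ℝ) * |Real.log (1 - β₂)|) ≤ (N : ℝ) * Real.log (1 - β₂) := by
        have h0 : ((N:ℝ)) * -|Real.log (1 - β₂)| ≤ (N:ℝ) * Real.log (1 - β₂) :=
          mul_le_mul_of_nonneg_left (neg_abs_le _) (Nat.cast_nonneg N)
        linarith
      have hPnn : (0:ℝ) ≤ ∏ p ∈ Tall d N, (1 + |η p.1 p.2 a|) := hPpos.le
      linarith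
    · have hC : (0:ℝ) ≤ (N : ℝ) * |Real.log (1 - β₂)| :=
        mul_nonneg (Nat.cast_nonneg N) (abs_nonneg _)
      linarith

/-- Expectation of `η(s) · A/(A+B)` vanishes, by independence and centering. -/
lemma integral_eta_mul_ratio (hmeas : ∀ n z, Measurable (η n z))
    (hindep : iIndepFun
      (fun p : ℕ × (Fin d → ℤ) => η p.1 p.2) μ)
    (hmean : ∀ n z, ∫ a, η n z a ∂μ = 0)
    {s : Site d} (hsT : s ∈ Tall d N) (f : Site d → ℝ) :
    ∫ a, η s.1 s.2 a * (Aenv d N s f (envOf η a)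
      / (Aenv d N s f (envOf η a) + Benv d N s f (envOf η a))) ∂μ = 0 := by
  classical
  have hs1 : 1 ≤ s.1 := Tall_fst_pos hsT
  set T' : Finset (Site d) := (Tall d N).erase s with hT'
  -- the environment read from a tuple indexed by T'
  set ext : (∀ _ : {x // x ∈ T'}, ℝ) → Site d → ℝ :=
    fun v p => if h : p ∈ T' then v ⟨p, h⟩ else 0 with hext
  have hextmeas : ∀ p : Site d, Measurable (fun v : (∀ _ : {x // x ∈ T'}, ℝ) => ext v p) := by
    intro p
    by_cases h : p ∈ T'
    · simpa [hext, h] using measurable_pi_apply (⟨p, h⟩ : {x // x ∈ T'})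
    · simpa [hext, h] using measurable_const
  set ψ : (∀ _ : {x // x ∈ T'}, ℝ) → ℝ := fun v =>
    Aenv d N s f (ext v) / (Aenv d N s f (ext v) + Benv d N s f (ext v)) with hψdef
  have hψmeas : Measurable ψ := by
    have hA := measurable_Aenv (N := N) (α := (∀ _ : {x // x ∈ T'}, ℝ)) s f
      (e := fun p v => ext v p) hextmeas
    have hB := measurable_Benv (N := N) (α := (∀ _ : {x // x ∈ T'}, ℝ)) s f
      (e := fun p v => ext v p) hextmeas
    exact hA.div (hA.add hB)
  have hφmeas : Measurable (fun v : (∀ _ : {x // x ∈ ({s} : Finset (Site d))}, ℝ) =>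
      v ⟨s, Finset.mem_singleton_self s⟩) := measurable_pi_apply _
  have hdisj : Disjoint ({s} : Finset (Site d)) T' := by
    rw [Finset.disjoint_singleton_left]
    exact Finset.notMem_erase s _
  have hX : IndepFun (fun a (i : {x // x ∈ ({s} : Finset (Site d))}) => η (i:Site d).1 (i:Site d).2 a)
      (fun a (i : {x // x ∈ T'}) => η (i:Site d).1 (i:Site d).2 a) μ :=
    hindep.indepFun_finset {s} T' hdisj (fun p => hmeas p.1 p.2)
  have hIndep : IndepFun (η s.1 s.2)
      (fun a => ψ (fun i : {x // x ∈ T'} => η (i:Site d).1 (i:Site d).2 a)) μ :=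
    hX.comp hφmeas hψmeas
  have hagree : ∀ a : Ω, ∀ p ∈ (Tall d N).erase s,
      ext (fun i : {x // x ∈ T'} => η (i:Site d).1 (i:Site d).2 a) p = envOf η a p := by
    intro a p hp
    have hpT : p ∈ T' := by rw [hT']; exact hp
    show (if h : p ∈ T' then η p.1 p.2 a else 0) = envOf η a p
    rw [dif_pos hpT]
  have hpt : ∀ a : Ω, η s.1 s.2 a * (Aenv d N s f (envOf η a)
      / (Aenv d N s f (envOf η a) + Benv d N s f (envOf η a)))
      = η s.1 s.2 a * ψ (fun i : {x // x ∈ T'} => η (i:Site d).1 (i:Site d).2 a) := by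
    intro a
    show _ = η s.1 s.2 a * (Aenv d N s f (ext (fun i : {x // x ∈ T'} =>
        η (i:Site d).1 (i:Site d).2 a)) / (Aenv d N s f (ext (fun i : {x // x ∈ T'} =>
        η (i:Site d).1 (i:Site d).2 a)) + Benv d N s f (ext (fun i : {x // x ∈ T'} =>
        η (i:Site d).1 (i:Site d).2 a))))
    rw [Aenv_congr_e hs1 (hagree a), Benv_congr_e (hagree a)]
  have hAmeas : AEStronglyMeasurable (η s.1 s.2) μ := (hmeas s.1 s.2).aestronglyMeasurable
  have hRmeas : AEStronglyMeasurable
      (fun a => ψ (fun i : {x // x ∈ T'} => η (i:Site d).1 (i:Site d).2 a)) μ :=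
    (hψmeas.comp (measurable_pi_lambda _
      (fun i => hmeas (i:Site d).1 (i:Site d).2))).aestronglyMeasurable
  have hkey := hIndep.integral_fun_mul_eq_mul_integral hAmeas hRmeas
  calc ∫ a, η s.1 s.2 a * (Aenv d N s f (envOf η a)
        / (Aenv d N s f (envOf η a) + Benv d N s f (envOf η a))) ∂μ
      = ∫ a, η s.1 s.2 a
          * ψ (fun i : {x // x ∈ T'} => η (i:Site d).1 (i:Site d).2 a) ∂μ :=
        integral_congr_ae (Filter.Eventually.of_forall (fun a => hpt a))
    _ = (∫ a, η s.1 s.2 a ∂μ)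
          * ∫ a, ψ (fun i : {x // x ∈ T'} => η (i:Site d).1 (i:Site d).2 a) ∂μ := hkey
    _ = 0 := by rw [hmean s.1 s.2, zero_mul]

/-- Single-site monotonicity step. -/
lemma step_lemma (hd : 1 ≤ d) (hmeas : ∀ n z, Measurable (η n z))
    (hindep : iIndepFun
      (fun p : ℕ × (Fin d → ℤ) => η p.1 p.2) μ)
    (hlb : ∀ n z, ∀ᵐ a ∂μ, -1 ≤ η n z a)
    (hmean : ∀ n z, ∫ a, η n z a ∂μ = 0)
    {q : ℝ} (hq0 : 0 < q)
    (hmom : ∀ n z, Integrable (fun a => |η n z a| ^ (1 + q)) μ)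
    {β₁ β₂ : ℝ} (h0 : 0 < β₁) (h2 : β₂ < 1) (h12 : β₁ ≤ β₂)
    {f : Site d → ℝ} (hf : ∀ p, β₁ ≤ f p ∧ f p ≤ β₂)
    {s : Site d} (hsT : s ∈ Tall d N)
    {c₁ c₂ : ℝ} (hc₁ : β₁ ≤ c₁) (hc₂ : c₂ ≤ β₂) (hc : c₁ ≤ c₂) :
    ∫ a, Real.log (Fenv d N (Function.update f s c₂) (envOf η a)) ∂μ
      ≤ ∫ a, Real.log (Fenv d N (Function.update f s c₁) (envOf η a)) ∂μ := by
  classical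
  have hs1 : 1 ≤ s.1 := Tall_fst_pos hsT
  have hβ₂0 : 0 ≤ β₂ := le_trans h0.le h12
  have hf0 : ∀ p, 0 ≤ f p ∧ f p ≤ β₂ := fun p => ⟨le_trans h0.le (hf p).1, (hf p).2⟩
  have hfu : ∀ c, 0 ≤ c → c ≤ β₂ →
      ∀ p, 0 ≤ Function.update f s c p ∧ Function.update f s c p ≤ β₂ := by
    intro c hcl hcr p
    rcases eq_or_ne p s with rfl | hne
    · rw [Function.update_self]; exact ⟨hcl, hcr⟩
    · rw [Function.update_of_ne hne]; exact hf0 p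
  have hc₁0 : 0 ≤ c₁ := le_trans h0.le hc₁
  have hc₂0 : 0 ≤ c₂ := le_trans hc₁0 hc
  have hint₂ : Integrable
      (fun a => Real.log (Fenv d N (Function.update f s c₂) (envOf η a))) μ :=
    integrable_log_Fenv hd hmeas hindep hlb hq0 hmom h2 (hfu c₂ hc₂0 hc₂)
  have hint₁ : Integrable
      (fun a => Real.log (Fenv d N (Function.update f s c₁) (envOf η a))) μ :=
    integrable_log_Fenv hd hmeas hindep hlb hq0 hmom h2 (hfu c₁ hc₁0 (le_trans hc hc₂))
  have hXR : Integrable (fun a => (c₂ - c₁) * (η s.1 s.2 a * (Aenv d N s f (envOf η a)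
      / (Aenv d N s f (envOf η a) + Benv d N s f (envOf η a))))) μ := by
    apply Integrable.const_mul
    have hA := measurable_Aenv (N := N) (α := Ω) s f (e := fun p a => η p.1 p.2 a)
      (fun p => hmeas p.1 p.2)
    have hB := measurable_Benv (N := N) (α := Ω) s f (e := fun p a => η p.1 p.2 a)
      (fun p => hmeas p.1 p.2)
    apply Integrable.mono' (integrable_eta hmeas hq0 hmom s.1 s.2).abs
      ((hmeas s.1 s.2).mul (hA.div (hA.add hB))).aestronglyMeasurable
    filter_upwards [ae_env_ge (N := N) hlb] with a ha
    have hAn := Aenv_nonneg (s := s) h2.le hf0 ha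
    have hBn := Benv_nonneg (s := s) h2.le hf0 ha
    have hRb : |Aenv d N s f (envOf η a)
        / (Aenv d N s f (envOf η a) + Benv d N s f (envOf η a))| ≤ 1 := by
      rcases eq_or_lt_of_le (add_nonneg hAn hBn) with hz | hz
      · rw [← hz, div_zero]
        simp
      · rw [abs_of_nonneg (div_nonneg hAn hz.le), div_le_one hz]
        linarith
    rw [Real.norm_eq_abs, Pi.mul_apply, Pi.div_apply, Pi.add_apply, abs_mul]
    calc |η s.1 s.2 a| * |Aenv d N s f (envOf η a)
          / (Aenv d N s f (envOf η a) + Benv d N s f (envOf η a))|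
        ≤ |η s.1 s.2 a| * 1 := mul_le_mul_of_nonneg_left hRb (abs_nonneg _)
      _ = |η s.1 s.2 a| := mul_one _
  have hzero : ∫ a, (c₂ - c₁) * (η s.1 s.2 a * (Aenv d N s f (envOf η a)
      / (Aenv d N s f (envOf η a) + Benv d N s f (envOf η a)))) ∂μ = 0 := by
    rw [integral_const_mul, integral_eta_mul_ratio hmeas hindep hmean hsT f, mul_zero]
  have hae : ∀ᵐ a ∂μ, Real.log (Fenv d N (Function.update f s c₂) (envOf η a))
      - Real.log (Fenv d N (Function.update f s c₁) (envOf η a))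
      ≤ (c₂ - c₁) * (η s.1 s.2 a * (Aenv d N s f (envOf η a)
        / (Aenv d N s f (envOf η a) + Benv d N s f (envOf η a)))) := by
    filter_upwards [ae_env_ge (N := N) hlb] with a ha
    have hAn := Aenv_nonneg (s := s) h2.le hf0 ha
    have hBn := Benv_nonneg (s := s) h2.le hf0 ha
    have hABpos : 0 < Aenv d N s f (envOf η a) + Benv d N s f (envOf η a) := by
      have hdec := Fenv_decomp (N := N) s hs1 f (envOf η a) 0
      have hpos : 0 < Fenv d N (Function.update f s 0) (envOf η a) :=
        Fenv_pos hd h2 (hfu 0 le_rfl hβ₂0) ha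
      rw [hdec] at hpos
      simpa using hpos
    have hx : -1 ≤ η s.1 s.2 a := ha s hsT
    have h1f : 0 < 1 + c₁ * η s.1 s.2 a :=
      lt_of_lt_of_le (by linarith) (factor_lb hc₁0 (le_trans hc hc₂) hx)
    have h2f : 0 < 1 + c₂ * η s.1 s.2 a :=
      lt_of_lt_of_le (by linarith) (factor_lb hc₂0 hc₂ hx)
    have hkey := key_log_ineq (x := η s.1 s.2 a) hAn hBn hABpos hc₁0 hc h1f h2f
    rw [Fenv_decomp (N := N) s hs1 f (envOf η a) c₂,
      Fenv_decomp (N := N) s hs1 f (envOf η a) c₁]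
    calc Real.log ((1 + c₂ * envOf η a s) * Aenv d N s f (envOf η a) + Benv d N s f (envOf η a))
          - Real.log ((1 + c₁ * envOf η a s) * Aenv d N s f (envOf η a)
            + Benv d N s f (envOf η a))
        ≤ (c₂ - c₁) * η s.1 s.2 a * (Aenv d N s f (envOf η a)
            / (Aenv d N s f (envOf η a) + Benv d N s f (envOf η a))) := hkey
      _ = (c₂ - c₁) * (η s.1 s.2 a * (Aenv d N s f (envOf η a)
            / (Aenv d N s f (envOf η a) + Benv d N s f (envOf η a)))) := by ring
  have hmono := integral_mono_ae (hint₂.sub hint₁) hXR hae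
  simp only [Pi.sub_apply] at hmono
  rw [integral_sub hint₂ hint₁, hzero] at hmono
  linarith

/-- Telescoping over sites. -/
lemma chain_lemma (hd : 1 ≤ d) (hmeas : ∀ n z, Measurable (η n z))
    (hindep : iIndepFun
      (fun p : ℕ × (Fin d → ℤ) => η p.1 p.2) μ)
    (hlb : ∀ n z, ∀ᵐ a ∂μ, -1 ≤ η n z a)
    (hmean : ∀ n z, ∫ a, η n z a ∂μ = 0)
    {q : ℝ} (hq0 : 0 < q)
    (hmom : ∀ n z, Integrable (fun a => |η n z a| ^ (1 + q)) μ)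
    {β₁ β₂ : ℝ} (h0 : 0 < β₁) (h2 : β₂ < 1) (h12 : β₁ ≤ β₂)
    (S : Finset (Site d)) :
    S ⊆ Tall d N →
      ∫ a, Real.log (Fenv d N (fun _ => β₂) (envOf η a)) ∂μ
        ≤ ∫ a, Real.log (Fenv d N (fun p => if p ∈ S then β₁ else β₂) (envOf η a)) ∂μ := by
  classical
  induction S using Finset.induction_on with
  | empty =>
    intro _
    have he : (fun p : Site d => if p ∈ (∅ : Finset (Site d)) then β₁ else β₂)
        = fun _ => β₂ := by
      funext p; simp
    rw [he]
  | @insert s S hs ih =>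
    intro hsub
    have hsT : s ∈ Tall d N := hsub (Finset.mem_insert_self s S)
    have hS : S ⊆ Tall d N := fun x hx => hsub (Finset.mem_insert_of_mem hx)
    have hfS : ∀ p : Site d, β₁ ≤ (if p ∈ S then β₁ else β₂) ∧ (if p ∈ S then β₁ else β₂) ≤ β₂ := by
      intro p
      by_cases h : p ∈ S
      · rw [if_pos h]; exact ⟨le_rfl, h12⟩
      · rw [if_neg h]; exact ⟨h12, le_rfl⟩
    have e1 : (fun p : Site d => if p ∈ insert s S then β₁ else β₂)
        = Function.update (fun p : Site d => if p ∈ S then β₁ else β₂) s β₁ := by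
      funext p
      rcases eq_or_ne p s with rfl | hne
      · rw [Function.update_self, if_pos (Finset.mem_insert_self p S)]
      · rw [Function.update_of_ne hne]
        by_cases h : p ∈ S
        · rw [if_pos h, if_pos (Finset.mem_insert_of_mem h)]
        · rw [if_neg h, if_neg (by simp [Finset.mem_insert, hne, h])]
    have e2 : (fun p : Site d => if p ∈ S then β₁ else β₂)
        = Function.update (fun p : Site d => if p ∈ S then β₁ else β₂) s β₂ := by
      funext p
      rcases eq_or_ne p s with rfl | hne
      · rw [Function.update_self, if_neg hs]
      · rw [Function.update_of_ne hne]
    have hstep := step_lemma hd hmeas hindep hlb hmean hq0 hmom h0 h2 h12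
      (f := fun p : Site d => if p ∈ S then β₁ else β₂) hfS hsT
      (c₁ := β₁) (c₂ := β₂) le_rfl le_rfl h12
    rw [← e2, ← e1] at hstep
    exact le_trans (ih hS) hstep

end Probability

end

end PolymerProof

/-- Monotonicity of the finite-volume free energy
`p_N(β) = (1/N) E[log Z_N^{β,ω}]` in `β` on `(0,1)`. -/
theorem polymer_finite_volume_free_energy_antitone
    {Ω : Type*} {m : MeasurableSpace Ω} {μ : Measure Ω} [IsProbabilityMeasure μ]
    (d : ℕ) (hd : 1 ≤ d)
    (η : ℕ → (Fin d → ℤ) → Ω → ℝ)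
    (hmeas : ∀ n z, Measurable (η n z))
    (hindep : iIndepFun
      (fun p : ℕ × (Fin d → ℤ) => η p.1 p.2) μ)
    (hident : ∀ n z, IdentDistrib (η n z) (η 0 0) μ μ)
    (hlb : ∀ n z, ∀ᵐ a ∂μ, -1 ≤ η n z a)
    (hmean : ∀ n z, ∫ a, η n z a ∂μ = 0)
    (q : ℝ) (hq0 : 0 < q) (hq1 : q < 1)
    (hmom : ∀ n z, Integrable (fun a => |η n z a| ^ (1 + q)) μ)
    (N : ℕ) (hN : 1 ≤ N)
    (hlogint : ∀ β ∈ Set.Ioo (0:ℝ) 1,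
      Integrable (fun a => Real.log (polymerZ d β η N a)) μ) :
    AntitoneOn (fun β : ℝ => (1 / N : ℝ) * ∫ a, Real.log (polymerZ d β η N a) ∂μ)
      (Set.Ioo 0 1) := by
  intro β₁ hβ₁ β₂ hβ₂ h12
  have h21 : ∫ a, Real.log (polymerZ d β₂ η N a) ∂μ
      ≤ ∫ a, Real.log (polymerZ d β₁ η N a) ∂μ := by
    show ∫ a, Real.log (PolymerProof.Fenv d N (fun _ => β₂) (PolymerProof.envOf η a)) ∂μ
      ≤ ∫ a, Real.log (PolymerProof.Fenv d N (fun _ => β₁) (PolymerProof.envOf η a)) ∂μ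
    have hchain := PolymerProof.chain_lemma hd hmeas hindep hlb hmean hq0 hmom
      hβ₁.1 hβ₂.2 h12 (PolymerProof.Tall d N) (subset_refl _)
    refine hchain.trans (le_of_eq (integral_congr_ae (Filter.Eventually.of_forall fun a => ?_)))
    have := PolymerProof.Fenv_congr_f (d := d) (N := N)
      (f₁ := fun p : PolymerProof.Site d => if p ∈ PolymerProof.Tall d N then β₁ else β₂)
      (f₂ := fun _ : PolymerProof.Site d => β₁) (e := PolymerProof.envOf η a)
      (fun p hp => by simp only [hp, if_true])
    exact congrArg Real.log this
  exact mul_le_mul_of_nonneg_left h21 (one_div_nonneg.2 (Nat.cast_nonneg N))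
end
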